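/- Let β > 0, let V : ℝ → ℝ be continuous and 2π-periodic, and let W : ℝ × ℝ → ℝ be continuous, 2π-periodic in each variable, and symmetric (W(x,y) = W(y,x)). Suppose ρ : ℝ → ℝ is continuous, 2π-periodic, and is a Kirkwood–Monroe fixed point for (V, W, β). Then ρ is a critical point of the free energy F[ρ] := β^{−1} ∫_0^{2π} ρ log ρ dx + ∫_0^{2π} V ρ dx + (1/2) ∫_0^{2π}∫_0^{2π} W(x,y)ρ(x)ρ(y) dx dy, in the sense that for every continuous 2π-periodic σ : ℝ → ℝ with ∫_0^{2π} σ(x) dx = 0, the function ε ↦ F[ρ + εσ] is differentiable at ε = 0 with derivative equal to 0. -/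

import Mathlib

open Real MeasureTheory

/-- The convolution with a two-variable kernel: `(W ⋆ ρ)(x) = ∫_0^{2π} W(x,y) ρ(y) dy`. -/
noncomputable def convW (W : ℝ → ℝ → ℝ) (ρ : ℝ → ℝ) (x : ℝ) : ℝ :=
  ∫ y in (0:ℝ)..(2 * π), W x y * ρ y

/-- The mean-field free energy
`F[ρ] = β⁻¹∫ρ log ρ + ∫Vρ + (1/2)∫∫W(x,y)ρ(x)ρ(y)` on `[0,2π]`. -/
noncomputable def freeEnergy (β : ℝ) (V : ℝ → ℝ) (W : ℝ → ℝ → ℝ) (ρ : ℝ → ℝ) : ℝ :=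
  β⁻¹ * (∫ x in (0:ℝ)..(2 * π), ρ x * Real.log (ρ x))
    + (∫ x in (0:ℝ)..(2 * π), V x * ρ x)
    + (1 / 2) * ∫ x in (0:ℝ)..(2 * π), ∫ y in (0:ℝ)..(2 * π), W x y * ρ x * ρ y

/-- `ρ` is a Kirkwood–Monroe fixed point for `(V, W, β)`:
`ρ(x) = Z⁻¹ exp(−β(V(x) + (W⋆ρ)(x)))` with `Z = ∫_0^{2π} exp(−β(V(y) + (W⋆ρ)(y))) dy`. -/
def IsKMFixedPointW (β : ℝ) (V : ℝ → ℝ) (W : ℝ → ℝ → ℝ) (ρ : ℝ → ℝ) : Prop :=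
  ∀ x : ℝ, ρ x =
    (∫ y in (0:ℝ)..(2 * π), Real.exp (-β * (V y + convW W ρ y)))⁻¹ *
      Real.exp (-β * (V x + convW W ρ x))

lemma contParam {g : ℝ → ℝ → ℝ} (hg : Continuous (Function.uncurry g)) :
    Continuous fun x => ∫ y in (0:ℝ)..(2*π), g x y :=
  intervalIntegral.continuous_parametric_intervalIntegral_of_continuous' hg 0 (2*π)

lemma swapInt {g : ℝ → ℝ → ℝ} (hg : Continuous (Function.uncurry g)) :
    (∫ x in (0:ℝ)..(2*π), ∫ y in (0:ℝ)..(2*π), g x y)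
      = ∫ y in (0:ℝ)..(2*π), ∫ x in (0:ℝ)..(2*π), g x y := by
  have h2π : (0:ℝ) ≤ 2*π := by positivity
  simp only [intervalIntegral.integral_of_le h2π]
  apply MeasureTheory.integral_integral_swap
  rw [Measure.prod_restrict]
  apply IntegrableOn.mono_set (t := Set.Icc 0 (2*π) ×ˢ Set.Icc 0 (2*π))
  · exact hg.continuousOn.integrableOn_compact (isCompact_Icc.prod isCompact_Icc)
  · exact Set.prod_mono Set.Ioc_subset_Icc_self Set.Ioc_subset_Icc_self

/-- A continuous `2π`-periodic Kirkwood–Monroe fixed point is a critical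
point of the free energy: for every continuous `2π`-periodic mean-zero direction `σ`,
`ε ↦ F[ρ + εσ]` is differentiable at `ε = 0` with derivative `0`. -/
theorem stmt4 (β : ℝ) (hβ : 0 < β)
    (V : ℝ → ℝ) (hV : Continuous V) (hVper : Function.Periodic V (2 * π))
    (W : ℝ → ℝ → ℝ) (hW : Continuous fun p : ℝ × ℝ => W p.1 p.2)
    (hWper1 : ∀ x y : ℝ, W (x + 2 * π) y = W x y)
    (hWper2 : ∀ x y : ℝ, W x (y + 2 * π) = W x y)
    (hWsym : ∀ x y : ℝ, W x y = W y x)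
    (ρ : ℝ → ℝ) (hρ : Continuous ρ) (hρper : Function.Periodic ρ (2 * π))
    (hKM : IsKMFixedPointW β V W ρ) :
    ∀ σ : ℝ → ℝ, Continuous σ → Function.Periodic σ (2 * π) →
      (∫ x in (0:ℝ)..(2 * π), σ x) = 0 →
      HasDerivAt (fun ε : ℝ => freeEnergy β V W (fun x => ρ x + ε * σ x)) 0 0 := by
  intro σ hσ hσper hσ0
  replace hKM : ∀ x : ℝ, ρ x =
      (∫ y in (0:ℝ)..(2 * π), Real.exp (-β * (V y + convW W ρ y)))⁻¹ *
        Real.exp (-β * (V x + convW W ρ x)) := hKM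
  have h2π : (0:ℝ) < 2 * π := by positivity
  have iI : ∀ {f : ℝ → ℝ}, Continuous f → IntervalIntegrable f volume 0 (2*π) :=
    fun h => h.intervalIntegrable _ _
  -- continuity of convolutions
  have hconv : ∀ f : ℝ → ℝ, Continuous f → Continuous (convW W f) := fun f hf =>
    contParam (show Continuous fun p : ℝ × ℝ => W p.1 p.2 * f p.2 from
      hW.mul (hf.comp continuous_snd))
  have hCρc : Continuous (convW W ρ) := hconv ρ hρ
  have hCσc : Continuous (convW W σ) := hconv σ hσ
  set Z := ∫ y in (0:ℝ)..(2*π), Real.exp (-β * (V y + convW W ρ y)) with hZdef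
  have hZpos : 0 < Z :=
    intervalIntegral.intervalIntegral_pos_of_pos (iI (continuous_const.mul (hV.add hCρc)).rexp)
      (fun x => Real.exp_pos _) h2π
  have hρpos : ∀ x, 0 < ρ x := fun x => by
    rw [hKM x]; exact mul_pos (inv_pos.mpr hZpos) (Real.exp_pos _)
  have hlogρ : ∀ x, Real.log (ρ x) = -Real.log Z + (-β * (V x + convW W ρ x)) := by
    intro x
    rw [hKM x, Real.log_mul (inv_ne_zero hZpos.ne') (Real.exp_ne_zero _),
      Real.log_inv, Real.log_exp]
  -- bounds on [0, 2π]
  obtain ⟨xm, hxm, hxmin⟩ := isCompact_Icc.exists_isMinOn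
    (Set.nonempty_Icc.2 h2π.le) hρ.continuousOn
  obtain ⟨xR, hxR, hxmax⟩ := isCompact_Icc.exists_isMaxOn
    (Set.nonempty_Icc.2 h2π.le) hρ.continuousOn
  obtain ⟨xM, hxM, hxMax⟩ := isCompact_Icc.exists_isMaxOn
    (Set.nonempty_Icc.2 h2π.le) hσ.abs.continuousOn
  set m := ρ xm with hmdef
  set R := ρ xR with hRdef
  set M := |σ xM| with hMdef
  have hm : 0 < m := hρpos xm
  have hM0 : 0 ≤ M := abs_nonneg _
  set δ := m / (2 * (M + 1)) with hδdef
  have hδ : 0 < δ := by positivity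
  have hδM : δ * (M + 1) = m / 2 := by
    rw [hδdef]; field_simp
  have hIcc : ∀ t ∈ Set.uIoc (0:ℝ) (2*π), t ∈ Set.Icc (0:ℝ) (2*π) := fun t ht =>
    Set.Ioc_subset_Icc_self (by rwa [Set.uIoc_of_le h2π.le] at ht)
  have hball : ∀ t ∈ Set.uIoc (0:ℝ) (2*π), ∀ ε ∈ Metric.ball (0:ℝ) δ,
      m/2 ≤ ρ t + ε * σ t ∧ ρ t + ε * σ t ≤ R + m/2 := by
    intro t ht ε hε
    have ht' := hIcc t ht
    have h1 : m ≤ ρ t := hxmin ht'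
    have h2 : ρ t ≤ R := hxmax ht'
    have h3 : |σ t| ≤ M := hxMax ht'
    have hε' : |ε| ≤ δ := le_of_lt (by simpa [Real.dist_eq] using hε)
    have h4 : |ε * σ t| ≤ m / 2 := by
      rw [abs_mul, ← hδM]
      exact mul_le_mul hε' (by linarith) (abs_nonneg _) hδ.le
    obtain ⟨h5, h6⟩ := abs_le.1 h4
    constructor <;> linarith
  -- entropy term derivative
  have hc : ∀ ε : ℝ, Continuous fun t => ρ t + ε * σ t := fun ε =>
    hρ.add (continuous_const.mul hσ)
  have hEnt := (intervalIntegral.hasDerivAt_integral_of_dominated_loc_of_deriv_le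
      (μ := volume) (F := fun ε t => (ρ t + ε * σ t) * Real.log (ρ t + ε * σ t))
      (F' := fun ε t => (Real.log (ρ t + ε * σ t) + 1) * σ t)
      (x₀ := (0:ℝ)) (a := (0:ℝ)) (b := 2*π)
      (bound := fun _ => (|Real.log (m/2)| + |Real.log (R + m/2)| + 1) * M)
      (Metric.ball_mem_nhds (0:ℝ) hδ)
      (Filter.Eventually.of_forall fun ε =>
        (((hc ε).measurable).mul
          (Real.measurable_log.comp (hc ε).measurable)).aestronglyMeasurable)
      (iI ((hc 0).mul ((hc 0).log fun t => by
        simpa using (hρpos t).ne')))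
      (((Real.measurable_log.comp (hc 0).measurable).add (measurable_const (a := (1:ℝ)))).mul
        hσ.measurable).aestronglyMeasurable
      (Filter.Eventually.of_forall (fun t ht ε hε => by
        obtain ⟨hl, hu⟩ := hball t ht ε hε
        have h3 : |σ t| ≤ M := hxMax (hIcc t ht)
        have hm2 : (0:ℝ) < m / 2 := by linarith
        have hlog : |Real.log (ρ t + ε * σ t)| ≤ |Real.log (m/2)| + |Real.log (R + m/2)| := by
          refine (abs_le_max_abs_abs (Real.log_le_log hm2 hl)
            (Real.log_le_log (by linarith) hu)).trans ?_
          exact max_le (le_add_of_nonneg_right (abs_nonneg _))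
            (le_add_of_nonneg_left (abs_nonneg _))
        rw [Real.norm_eq_abs, abs_mul]
        refine mul_le_mul ((abs_add_le _ _).trans ?_) h3 (abs_nonneg _) (by positivity)
        simpa using add_le_add hlog (le_refl (1:ℝ))))
      (intervalIntegrable_const)
      (Filter.Eventually.of_forall (fun t ht ε hε => by
        have hm2 : (0:ℝ) < m / 2 := by linarith
        have hne : ρ t + ε * σ t ≠ 0 := (lt_of_lt_of_le hm2 (hball t ht ε hε).1).ne'
        have h1 : HasDerivAt (fun ε : ℝ => ρ t + ε * σ t) (σ t) ε := by
          simpa using ((hasDerivAt_id ε).mul_const (σ t)).const_add (ρ t)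
        simpa [Function.comp_def] using (Real.hasDerivAt_mul_log hne).comp ε h1))).2
  simp only [zero_mul, add_zero] at hEnt
  -- linear term
  set IVσ := ∫ x in (0:ℝ)..(2*π), V x * σ x with hIVσ
  set IVρ := ∫ x in (0:ℝ)..(2*π), V x * ρ x with hIVρ
  have hLin : ∀ ε : ℝ, (∫ x in (0:ℝ)..(2*π), V x * (ρ x + ε * σ x)) = IVρ + ε * IVσ := by
    intro ε
    rw [intervalIntegral.integral_congr
      (g := fun x => V x * ρ x + ε * (V x * σ x)) (fun x _ => by ring)]
    rw [intervalIntegral.integral_add (iI (hV.fun_mul hρ))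
      (iI (continuous_const.fun_mul (hV.fun_mul hσ))), intervalIntegral.integral_const_mul]
  -- quadratic term
  set A := ∫ x in (0:ℝ)..(2*π), ρ x * convW W ρ x with hA
  set B := ∫ x in (0:ℝ)..(2*π), (σ x * convW W ρ x + ρ x * convW W σ x) with hB
  set C := ∫ x in (0:ℝ)..(2*π), σ x * convW W σ x with hC
  have hQin : ∀ (ε : ℝ) (x : ℝ),
      (∫ y in (0:ℝ)..(2*π), W x y * (ρ x + ε * σ x) * (ρ y + ε * σ y))
        = ρ x * convW W ρ x + ε * (σ x * convW W ρ x + ρ x * convW W σ x)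
          + ε^2 * (σ x * convW W σ x) := by
    intro ε x
    have hWx : Continuous fun y => W x y * ρ y :=
      (hW.comp (Continuous.prodMk_right x)).mul hρ
    have hWx' : Continuous fun y => W x y * σ y :=
      (hW.comp (Continuous.prodMk_right x)).mul hσ
    rw [intervalIntegral.integral_congr
      (g := fun y => (ρ x + ε * σ x) * (W x y * ρ y)
        + (ε * (ρ x + ε * σ x)) * (W x y * σ y)) (fun y _ => by ring)]
    rw [intervalIntegral.integral_add (iI (continuous_const.fun_mul hWx)) (iI (continuous_const.fun_mul hWx')),
      intervalIntegral.integral_const_mul, intervalIntegral.integral_const_mul]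
    show (ρ x + ε * σ x) * convW W ρ x + ε * (ρ x + ε * σ x) * convW W σ x = _
    ring
  have hQ : ∀ ε : ℝ,
      (∫ x in (0:ℝ)..(2*π), ∫ y in (0:ℝ)..(2*π), W x y * (ρ x + ε * σ x) * (ρ y + ε * σ y))
        = A + ε * B + ε^2 * C := by
    intro ε
    rw [intervalIntegral.integral_congr (fun x _ => hQin ε x)]
    rw [intervalIntegral.integral_add (IntervalIntegrable.add
        (iI (hρ.fun_mul hCρc))
        (iI (continuous_const.fun_mul ((hσ.fun_mul hCρc).fun_add (hρ.fun_mul hCσc)))))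
        (iI (continuous_const.fun_mul (hσ.fun_mul hCσc))),
      intervalIntegral.integral_add (iI (hρ.fun_mul hCρc))
        (iI (continuous_const.fun_mul ((hσ.fun_mul hCρc).fun_add (hρ.fun_mul hCσc)))),
      intervalIntegral.integral_const_mul, intervalIntegral.integral_const_mul]
  -- assemble the derivative
  set E' := ∫ t in (0:ℝ)..(2*π), (Real.log (ρ t) + 1) * σ t with hE'def
  have hmain : HasDerivAt (fun ε : ℝ => freeEnergy β V W (fun x => ρ x + ε * σ x))
      (β⁻¹ * E' + IVσ + (1/2) * B) 0 := by
    simp only [freeEnergy]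
    apply HasDerivAt.add
    apply HasDerivAt.add
    · exact hEnt.const_mul β⁻¹
    · simp only [hLin]
      simpa using ((hasDerivAt_id (0:ℝ)).mul_const IVσ).const_add IVρ
    · simp only [hQ]
      have h1 : HasDerivAt (fun ε : ℝ => A + ε * B + ε^2 * C) (B + 0) 0 := by
        apply HasDerivAt.add
        · simpa using ((hasDerivAt_id (0:ℝ)).mul_const B).const_add A
        · simpa using (hasDerivAt_pow 2 (0:ℝ)).mul_const C
      simpa using h1.const_mul (1/2 : ℝ)
  -- Fubini: ∫ ρ ⋅ (W⋆σ) = ∫ σ ⋅ (W⋆ρ)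
  have hfub : (∫ x in (0:ℝ)..(2*π), ρ x * convW W σ x)
      = ∫ x in (0:ℝ)..(2*π), σ x * convW W ρ x := by
    have h1 : (∫ x in (0:ℝ)..(2*π), ρ x * convW W σ x)
        = ∫ x in (0:ℝ)..(2*π), ∫ y in (0:ℝ)..(2*π), ρ x * (W x y * σ y) := by
      refine intervalIntegral.integral_congr fun x _ => ?_
      rw [show convW W σ x = ∫ y in (0:ℝ)..(2*π), W x y * σ y from rfl,
        ← intervalIntegral.integral_const_mul]
    rw [h1, swapInt (g := fun x y => ρ x * (W x y * σ y))
      (show Continuous fun p : ℝ × ℝ => ρ p.1 * (W p.1 p.2 * σ p.2) from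
        (hρ.comp continuous_fst).mul (hW.mul (hσ.comp continuous_snd)))]
    refine intervalIntegral.integral_congr fun y _ => ?_
    rw [show convW W ρ y = ∫ x in (0:ℝ)..(2*π), W y x * ρ x from rfl,
      ← intervalIntegral.integral_const_mul]
    refine intervalIntegral.integral_congr fun x _ => ?_
    rw [hWsym x y]; ring
  have hBval : B = 2 * ∫ x in (0:ℝ)..(2*π), σ x * convW W ρ x := by
    rw [hB, intervalIntegral.integral_add (iI (hσ.fun_mul hCρc)) (iI (hρ.fun_mul hCσc)), hfub]
    ring
  -- value of E'
  have hE'val : E' = -β * IVσ - β * ∫ x in (0:ℝ)..(2*π), σ x * convW W ρ x := by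
    rw [hE'def, intervalIntegral.integral_congr
      (g := fun t => (1 - Real.log Z) * σ t + (-β) * (V t * σ t)
        + (-β) * (σ t * convW W ρ t)) (fun t _ => by rw [hlogρ t]; ring)]
    rw [intervalIntegral.integral_add (IntervalIntegrable.add
        (iI (continuous_const.fun_mul hσ)) (iI (continuous_const.fun_mul (hV.fun_mul hσ))))
        (iI (continuous_const.fun_mul (hσ.fun_mul hCρc))),
      intervalIntegral.integral_add (iI (continuous_const.fun_mul hσ)) (iI (continuous_const.fun_mul (hV.fun_mul hσ))),
      intervalIntegral.integral_const_mul, intervalIntegral.integral_const_mul,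
      intervalIntegral.integral_const_mul, hσ0]
    ring
  have hzero : β⁻¹ * E' + IVσ + (1/2) * B = 0 := by
    rw [hE'val, hBval]
    field_simp
    ring
  exact hzero ▸ hmain
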